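/- Let F be a countable algebraically closed field and m as above the kernel of ε : F[t_i | i ∈ ℕ] → F(s). Then the singleton {m} is a closed (hence constructible) subset of Spec(F[t_i | i ∈ ℕ]), but its image under the map Spec(F[t_i | i ∈ ℕ]) → Spec(F[t_1]) induced by the inclusion F[t_1] ⊆ F[t_i | i ∈ ℕ] is the singleton {0}, which is neither open nor closed in Spec(F[t_1]) and hence not constructible. -/

import Mathlib

/-- The homomorphism `ε : F[t_i | i ∈ ℕ] → F(s)`, `t_0 ↦ s`, `t_i ↦ 1/(s - a i)`. -/
noncomputable def eps {F : Type*} [Field F] (a : ℕ → F) : MvPolynomial ℕ F →+* RatFunc F :=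
  MvPolynomial.eval₂Hom (RatFunc.C : F →+* RatFunc F)
    (fun i : ℕ => if i = 0 then RatFunc.X else (RatFunc.X - RatFunc.C (a i))⁻¹)

section Aux

variable {F : Type*} [Field F]

lemma eps_C (a : ℕ → F) (c : F) : eps a (MvPolynomial.C c) = RatFunc.C c := by
  simp [eps]

lemma eps_X0 (a : ℕ → F) : eps a (MvPolynomial.X 0) = RatFunc.X := by
  simp [eps]

lemma eps_Xi (a : ℕ → F) {i : ℕ} (hi : i ≠ 0) :
    eps a (MvPolynomial.X i) = (RatFunc.X - RatFunc.C (a i))⁻¹ := by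
  simp [eps, hi]

lemma eps_surjective [IsAlgClosed F] (a : ℕ → F) (ha : ∀ x : F, ∃ i : ℕ, 0 < i ∧ a i = x) :
    Function.Surjective (eps a) := by
  intro f
  have hC : ∀ c : F, RatFunc.C c ∈ (eps a).range := fun c => ⟨MvPolynomial.C c, eps_C a c⟩
  have hX : (RatFunc.X : RatFunc F) ∈ (eps a).range := ⟨MvPolynomial.X 0, eps_X0 a⟩
  have hinv : ∀ x : F, (RatFunc.X - RatFunc.C x)⁻¹ ∈ (eps a).range := by
    intro x
    obtain ⟨i, hi, rfl⟩ := ha x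
    exact ⟨MvPolynomial.X i, eps_Xi a hi.ne'⟩
  have hpoly : ∀ p : Polynomial F, algebraMap (Polynomial F) (RatFunc F) p ∈ (eps a).range := by
    intro p
    induction p using Polynomial.induction_on with
    | C c => rw [RatFunc.algebraMap_C]; exact hC c
    | add p q hp hq => rw [map_add]; exact add_mem hp hq
    | monomial n c ih =>
      rw [pow_succ, ← mul_assoc, map_mul, RatFunc.algebraMap_X]
      exact mul_mem ih hX
  have key : ∀ m : Multiset F,
      ((m.map fun r : F => RatFunc.X - RatFunc.C r).prod)⁻¹ ∈ (eps a).range := by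
    intro m
    induction m using Multiset.induction_on with
    | empty => simpa using one_mem (eps a).range
    | cons r m ih =>
      rw [Multiset.map_cons, Multiset.prod_cons, mul_inv]
      exact mul_mem (hinv r) ih
  have hinvq : ∀ q : Polynomial F,
      (algebraMap (Polynomial F) (RatFunc F) q)⁻¹ ∈ (eps a).range := by
    intro q
    rcases eq_or_ne q 0 with rfl | hq
    · simpa using zero_mem (eps a).range
    · have hs : q = Polynomial.C q.leadingCoeff *
          (q.roots.map fun r => Polynomial.X - Polynomial.C r).prod :=
        (IsAlgClosed.splits q).eq_prod_roots
      rw [hs, map_mul, mul_inv, RatFunc.algebraMap_C, ← map_inv₀, map_multiset_prod,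
        Multiset.map_map]
      have : (q.roots.map fun r =>
          algebraMap (Polynomial F) (RatFunc F) (Polynomial.X - Polynomial.C r)) =
          q.roots.map fun r => RatFunc.X - RatFunc.C r := by
        apply Multiset.map_congr rfl
        intro r _
        rw [map_sub, RatFunc.algebraMap_X, RatFunc.algebraMap_C]
      rw [Function.comp_def, this]
      exact mul_mem (hC _) (key _)
  rw [← RatFunc.num_div_denom f, div_eq_mul_inv]
  exact mul_mem (hpoly f.num) (hinvq f.denom)

lemma transcendental_g (c : F) :
    Transcendental F ((RatFunc.X - RatFunc.C c)⁻¹ : RatFunc F) := by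
  have hX : Transcendental F (RatFunc.X : RatFunc F) := by
    rw [← RatFunc.algebraMap_X]
    exact (transcendental_algebraMap_iff
      (IsFractionRing.injective (Polynomial F) (RatFunc F))).2 (Polynomial.transcendental_X F)
  have hXC : Transcendental F (RatFunc.X - RatFunc.C c) := by
    have := hX.aeval (Polynomial.X - Polynomial.C c)
      (by simp)
      (by rw [Polynomial.leadingCoeff_X_sub_C]; exact one_mem _)
    simpa [map_sub, RatFunc.algebraMap_eq_C] using this
  intro halg
  exact hXC (by simpa using halg.inv)

end Aux

/-- The singleton `{m}` (with `m = ker ε`) is closed in `Spec F[t_i | i ∈ ℕ]`, but its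
image in `Spec F[t_1]` under the map induced by the inclusion `F[t_1] ⊆ F[t_i | i ∈ ℕ]`
is the singleton `{0}`, which is neither open nor closed and not constructible (not a
finite union of locally closed sets). -/
theorem stmt16 {F : Type*} [Field F] [IsAlgClosed F] [Countable F]
    (a : ℕ → F) (ha : ∀ x : F, ∃ i : ℕ, 0 < i ∧ a i = x) :
    IsClosed {p : PrimeSpectrum (MvPolynomial ℕ F) | p.asIdeal = RingHom.ker (eps a)} ∧
    PrimeSpectrum.comap (Polynomial.aeval (MvPolynomial.X 1 : MvPolynomial ℕ F) :
        Polynomial F →ₐ[F] MvPolynomial ℕ F).toRingHom ''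
        {p : PrimeSpectrum (MvPolynomial ℕ F) | p.asIdeal = RingHom.ker (eps a)} =
      {p : PrimeSpectrum (Polynomial F) | p.asIdeal = ⊥} ∧
    ¬ IsOpen {p : PrimeSpectrum (Polynomial F) | p.asIdeal = ⊥} ∧
    ¬ IsClosed {p : PrimeSpectrum (Polynomial F) | p.asIdeal = ⊥} ∧
    ¬ ∃ (n : ℕ) (U C : Fin n → Set (PrimeSpectrum (Polynomial F))),
        (∀ k, IsOpen (U k)) ∧ (∀ k, IsClosed (C k)) ∧
          {p : PrimeSpectrum (Polynomial F) | p.asIdeal = ⊥} = ⋃ k, U k ∩ C k := by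
  have hsurj := eps_surjective a ha
  have hmax : (RingHom.ker (eps a)).IsMaximal :=
    RingHom.ker_isMaximal_of_surjective _ hsurj
  -- the bottom point of `Spec F[X]` and the point `(X)`
  set botPt : PrimeSpectrum (Polynomial F) := ⟨⊥, Ideal.bot_prime⟩ with hbotPt
  have hXprime : (Ideal.span {Polynomial.X} : Ideal (Polynomial F)).IsPrime :=
    (Ideal.span_singleton_prime (Polynomial.X_ne_zero (R := F))).2 Polynomial.prime_X
  set XPt : PrimeSpectrum (Polynomial F) := ⟨Ideal.span {Polynomial.X}, hXprime⟩ with hXPt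
  have hXne : XPt.asIdeal ≠ ⊥ := by
    show Ideal.span {Polynomial.X} ≠ (⊥ : Ideal (Polynomial F))
    rw [Ne, Ideal.span_singleton_eq_bot]
    exact Polynomial.X_ne_zero (R := F)
  -- any closed set containing `botPt` is everything
  have hclosed_univ : ∀ C : Set (PrimeSpectrum (Polynomial F)), IsClosed C → botPt ∈ C →
      C = Set.univ := by
    intro C hC hbot
    obtain ⟨s, rfl⟩ := (PrimeSpectrum.isClosed_iff_zeroLocus C).1 hC
    rw [PrimeSpectrum.mem_zeroLocus] at hbot
    apply Set.eq_univ_iff_forall.2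
    intro p
    rw [PrimeSpectrum.mem_zeroLocus]
    refine hbot.trans ?_
    intro x hx
    have hx0 : x = 0 := Ideal.mem_bot.1 (show x ∈ (⊥ : Ideal (Polynomial F)) from hx)
    simp [hx0]
  -- the set `{⊥}` is not open
  have hnotopen : ¬ IsOpen {p : PrimeSpectrum (Polynomial F) | p.asIdeal = ⊥} := by
    intro hop
    have hcl : IsClosed {p : PrimeSpectrum (Polynomial F) | p.asIdeal = ⊥}ᶜ :=
      hop.isClosed_compl
    obtain ⟨s, hs⟩ := (PrimeSpectrum.isClosed_iff_zeroLocus _).1 hcl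
    have hbotnot : botPt ∉ PrimeSpectrum.zeroLocus s := by
      rw [← hs]
      simp [hbotPt]
    rw [PrimeSpectrum.mem_zeroLocus] at hbotnot
    obtain ⟨f, hfs, hf0⟩ := Set.not_subset.1 hbotnot
    have hf0' : f ≠ 0 := by
      intro h
      exact hf0 (by simp [h])
    obtain ⟨c, hc⟩ : ∃ c : F, ¬ f.IsRoot c :=
      ((Polynomial.finite_setOf_isRoot hf0').infinite_compl).nonempty
    have hcprime : (Ideal.span {Polynomial.X - Polynomial.C c} : Ideal (Polynomial F)).IsPrime :=
      (Ideal.span_singleton_prime (Polynomial.X_sub_C_ne_zero c)).2 (Polynomial.prime_X_sub_C c)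
    set cPt : PrimeSpectrum (Polynomial F) := ⟨Ideal.span {Polynomial.X - Polynomial.C c},
      hcprime⟩
    have hcmem : cPt ∈ PrimeSpectrum.zeroLocus s := by
      rw [← hs]
      simp only [Set.mem_compl_iff, Set.mem_setOf_eq]
      rw [Ideal.span_singleton_eq_bot]
      exact Polynomial.X_sub_C_ne_zero c
    rw [PrimeSpectrum.mem_zeroLocus] at hcmem
    have : f ∈ Ideal.span {Polynomial.X - Polynomial.C c} := hcmem hfs
    rw [Ideal.mem_span_singleton] at this
    exact hc ((Polynomial.dvd_iff_isRoot).1 this)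
  refine ⟨?_, ?_, hnotopen, ?_, ?_⟩
  · -- closedness of `{m}`
    have : {p : PrimeSpectrum (MvPolynomial ℕ F) | p.asIdeal = RingHom.ker (eps a)} =
        PrimeSpectrum.zeroLocus (RingHom.ker (eps a) : Set (MvPolynomial ℕ F)) := by
      ext p
      simp only [Set.mem_setOf_eq, PrimeSpectrum.mem_zeroLocus, SetLike.coe_subset_coe]
      constructor
      · intro h; rw [h]
      · intro h
        exact ((hmax.eq_of_le p.isPrime.ne_top h).symm)
    rw [this]
    exact PrimeSpectrum.isClosed_zeroLocus _
  · -- the image computation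
    set φ := (Polynomial.aeval (MvPolynomial.X 1 : MvPolynomial ℕ F) :
      Polynomial F →ₐ[F] MvPolynomial ℕ F).toRingHom with hφ
    have heval : ∀ f : Polynomial F,
        eps a (φ f) = Polynomial.aeval ((RatFunc.X - RatFunc.C (a 1))⁻¹ : RatFunc F) f := by
      intro f
      induction f using Polynomial.induction_on with
      | C c =>
        simp only [hφ, AlgHom.toRingHom_eq_coe, RingHom.coe_coe, Polynomial.aeval_C,
          MvPolynomial.algebraMap_eq, RatFunc.algebraMap_eq_C]
        rw [eps_C]
      | add p q hp hq => simp only [map_add, hp, hq]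
      | monomial n c ih =>
        have h1 : φ (Polynomial.C c * Polynomial.X ^ (n + 1)) =
            φ (Polynomial.C c * Polynomial.X ^ n) * φ Polynomial.X := by
          rw [← map_mul]; ring_nf
        rw [h1, map_mul, ih]
        have h2 : φ Polynomial.X = MvPolynomial.X 1 := by simp [hφ]
        rw [h2, eps_Xi a one_ne_zero]
        simp [pow_succ, mul_assoc]
    have hcomap : Ideal.comap φ (RingHom.ker (eps a)) = ⊥ := by
      refine le_antisymm ?_ bot_le
      intro f hf
      rw [Ideal.mem_comap, RingHom.mem_ker, heval] at hf
      rw [Ideal.mem_bot]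
      exact (transcendental_iff.1 (transcendental_g (a 1))) f hf
    have hprime : (RingHom.ker (eps a)).IsPrime := hmax.isPrime
    set mPt : PrimeSpectrum (MvPolynomial ℕ F) := ⟨RingHom.ker (eps a), hprime⟩
    ext q
    simp only [Set.mem_image, Set.mem_setOf_eq]
    constructor
    · rintro ⟨p, hp, rfl⟩
      show (PrimeSpectrum.comap φ p).asIdeal = ⊥
      rw [PrimeSpectrum.comap_asIdeal, hp, hcomap]
    · intro hq
      refine ⟨mPt, rfl, ?_⟩
      apply PrimeSpectrum.ext
      rw [PrimeSpectrum.comap_asIdeal, hq]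
      exact hcomap
  · -- not closed
    intro hcl
    have hbot : botPt ∈ {p : PrimeSpectrum (Polynomial F) | p.asIdeal = ⊥} := rfl
    have := hclosed_univ _ hcl hbot
    have hXmem : XPt ∈ {p : PrimeSpectrum (Polynomial F) | p.asIdeal = ⊥} := by
      rw [this]; trivial
    exact hXne hXmem
  · -- not constructible
    rintro ⟨n, U, C, hU, hC, hdecomp⟩
    have hbot : botPt ∈ {p : PrimeSpectrum (Polynomial F) | p.asIdeal = ⊥} := rfl
    rw [hdecomp] at hbot
    obtain ⟨k, hk⟩ := Set.mem_iUnion.1 hbot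
    have hCk : C k = Set.univ := hclosed_univ _ (hC k) hk.2
    have hUk : U k = {p : PrimeSpectrum (Polynomial F) | p.asIdeal = ⊥} := by
      apply Set.eq_of_subset_of_subset
      · intro p hp
        rw [hdecomp]
        exact Set.mem_iUnion.2 ⟨k, hp, by rw [hCk]; trivial⟩
      · intro p hp
        have : p = botPt := PrimeSpectrum.ext hp
        rw [this]
        exact hk.1
    exact hnotopen (hUk ▸ hU k)
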